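/- Let T > 0, a ∈ ℝ, and C > 0. Let θ, θ̃ : ℝ → ℝ be bounded, measurable, and even. Let f, f̃ : ℝ × [0,T] → ℝ be jointly measurable with f nonnegative, ‖f(·,t)‖_{L¹(ℝ)} ≤ C and ‖f̃(·,t)‖_{L¹(ℝ)} ≤ C for all t ∈ [0,T], and let g : ℝ × [0,T] → ℝ be bounded and jointly measurable. Assume hypotheses (H1) and (H2) as follows: (H1) for every bounded measurable φ : ℝ → ℝ and every t ∈ [0,T], ∫_ℝ f̃(x,t) φ(x) dx = ∫₀^t ∫∫_{ℝ²} [ 2 f̃(x₁,s) f(x₂,s) θ(x₁−x₂) + f(x₁,s) f(x₂,s) θ̃(x₁−x₂) ] · [ 2 φ((x₁+x₂)/2) − φ(x₁) − φ(x₂) ] dx₁ dx₂ ds; (H2) for every x ∈ ℝ and t ∈ [0,T], g(x,t) = 𝟙[x ≤ a] + ∫_t^T ∫_ℝ 2 f(y,s) θ(x−y) [ 2 g((x+y)/2, s) − g(x,s) − g(y,s) ] dy ds. Then ∫_{−∞}^a f̃(x,T) dx = ∫₀^T ∫₀^∞ ∫_ℝ 2 θ̃(r) f(r+y, s) f(y,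 s) [ 2 g(y + r/2, s) − g(r+y, s) − g(y, s) ] dy dr ds. (This expresses the first-order change of the sub-threshold opinion fraction, under a perturbation θ̃ of the interaction kernel, as an integral linear in θ̃ over nonnegative opinion differences r; the integral against θ̃ gives the Fréchet derivative ∂_θ M_θ.) -/

import Mathlib

open MeasureTheory Set Function

noncomputable def s13B (θ : ℝ → ℝ) (f g : ℝ → ℝ → ℝ) (x u : ℝ) : ℝ :=
  ∫ y, 2 * f y u * θ (x - y) * (2 * g ((x + y) / 2) u - g x u - g y u)

noncomputable def s13L (φ : ℝ → ℝ) (p : ℝ × ℝ) : ℝ :=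
  2 * φ ((p.1 + p.2) / 2) - φ p.1 - φ p.2

noncomputable def s13shear : (ℝ × ℝ) ≃ᵐ (ℝ × ℝ) where
  toFun z := (z.1 + z.2, z.2)
  invFun z := (z.1 - z.2, z.2)
  left_inv z := by simp
  right_inv z := by simp
  measurable_toFun := (measurable_fst.add measurable_snd).prodMk measurable_snd
  measurable_invFun := (measurable_fst.sub measurable_snd).prodMk measurable_snd

lemma s13B_measurable {θ : ℝ → ℝ} {f g : ℝ → ℝ → ℝ} (hθ : Measurable θ)
    (hf : Measurable (uncurry f)) (hg : Measurable (uncurry g)) :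
    Measurable fun z : ℝ × ℝ => s13B θ f g z.1 z.2 := by
  have h : Measurable fun q : (ℝ × ℝ) × ℝ =>
      2 * f q.2 q.1.2 * θ (q.1.1 - q.2) *
        (2 * g ((q.1.1 + q.2) / 2) q.1.2 - g q.1.1 q.1.2 - g q.2 q.1.2) := by fun_prop
  exact h.stronglyMeasurable.integral_prod_right'.measurable

/-- Bound on `s13B` in terms of kernel and `g` bounds and the `L¹` bound of `f`. -/
lemma s13B_bound {θ : ℝ → ℝ} {f g : ℝ → ℝ → ℝ} {Kθ Kg C : ℝ}
    (hθ : ∀ r, |θ r| ≤ Kθ) (hg : ∀ x t, |g x t| ≤ Kg)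
    {u : ℝ} (hfu : Integrable (fun x => f x u))
    (hfC : (∫ x : ℝ, |f x u|) ≤ C) (x : ℝ) :
    |s13B θ f g x u| ≤ 8 * Kθ * Kg * C := by
  have hKθ0 : 0 ≤ Kθ := (abs_nonneg _).trans (hθ 0)
  have hKg0 : 0 ≤ Kg := (abs_nonneg _).trans (hg 0 0)
  have hmaj : Integrable (fun y => 8 * Kθ * Kg * |f y u|) := (hfu.abs.const_mul _)
  have hb : ∀ y : ℝ, ‖2 * f y u * θ (x - y) * (2 * g ((x + y) / 2) u - g x u - g y u)‖
      ≤ 8 * Kθ * Kg * |f y u| := by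
    intro y
    rw [Real.norm_eq_abs, abs_mul, abs_mul, abs_mul, abs_two]
    have h1 : |θ (x - y)| ≤ Kθ := hθ _
    have h2 : |2 * g ((x + y) / 2) u - g x u - g y u| ≤ 4 * Kg := by
      have := hg ((x + y) / 2) u
      have := hg x u
      have := hg y u
      have e1 := abs_sub (2 * g ((x + y) / 2) u - g x u) (g y u)
      have e2 := abs_sub (2 * g ((x + y) / 2) u) (g x u)
      rw [abs_mul, abs_two] at e2
      calc |2 * g ((x + y) / 2) u - g x u - g y u|
          ≤ |2 * g ((x + y) / 2) u - g x u| + |g y u| := abs_sub _ _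
        _ ≤ (|2 * g ((x + y) / 2) u| + |g x u|) + |g y u| := by
            gcongr; exact abs_sub _ _
        _ ≤ (2 * Kg + Kg) + Kg := by
            rw [abs_mul, abs_two]
            have g1 := hg ((x + y) / 2) u
            have g2 := hg x u
            have g3 := hg y u
            nlinarith
        _ = 4 * Kg := by ring
    have hfnn : (0:ℝ) ≤ |f y u| := abs_nonneg _
    calc 2 * |f y u| * |θ (x - y)| * |2 * g ((x + y) / 2) u - g x u - g y u|
        ≤ 2 * |f y u| * Kθ * (4 * Kg) := by
          have s1 : 2 * |f y u| * |θ (x - y)| ≤ 2 * |f y u| * Kθ := by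
            have := mul_le_mul_of_nonneg_left h1 (by positivity : (0:ℝ) ≤ 2 * |f y u|)
            linarith
          exact mul_le_mul s1 h2 (abs_nonneg _) (by positivity)
        _ = 8 * Kθ * Kg * |f y u| := by ring
  have := norm_integral_le_of_norm_le hmaj (Filter.Eventually.of_forall hb)
  rw [Real.norm_eq_abs] at this
  refine this.trans ?_
  rw [integral_const_mul]
  have h0 : (0:ℝ) ≤ 8 * Kθ * Kg := by positivity
  calc 8 * Kθ * Kg * ∫ y, |f y u| ≤ 8 * Kθ * Kg * C := by gcongr
    _ = 8 * Kθ * Kg * C := rfl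

/-- Core integrability/bound lemma on `ℝ × ℝ`. -/
lemma s13core {u v : ℝ → ℝ} {Cu Cv : ℝ} (hu : Integrable u) (hv : Integrable v)
    (hui : (∫ x, |u x|) ≤ Cu) (hvi : (∫ x, |v x|) ≤ Cv)
    {F : ℝ × ℝ → ℝ} (hF : AEStronglyMeasurable F volume) {c0 : ℝ} (hc0 : 0 ≤ c0)
    (hb : ∀ p : ℝ × ℝ, |F p| ≤ c0 * (|u p.1| * |v p.2|)) :
    Integrable F volume ∧ |∫ p : ℝ × ℝ, F p| ≤ c0 * (Cu * Cv) := by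
  have hCu : 0 ≤ Cu := le_trans (integral_nonneg fun x => abs_nonneg _) hui
  have hCv : 0 ≤ Cv := le_trans (integral_nonneg fun x => abs_nonneg _) hvi
  have hG : Integrable (fun p : ℝ × ℝ => c0 * (|u p.1| * |v p.2|)) volume := by
    rw [Measure.volume_eq_prod]
    exact (hu.abs.mul_prod hv.abs).const_mul c0
  constructor
  · refine hG.mono' hF (Filter.Eventually.of_forall fun p => ?_)
    rw [Real.norm_eq_abs]
    exact hb p
  · have h1 := norm_integral_le_of_norm_le hG
      (Filter.Eventually.of_forall fun p => by rw [Real.norm_eq_abs]; exact hb p)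
    rw [Real.norm_eq_abs] at h1
    refine h1.trans ?_
    rw [integral_const_mul, Measure.volume_eq_prod,
      integral_prod_mul (fun x => |u x|) (fun y => |v y|)]
    have h2 : (0:ℝ) ≤ ∫ x, |u x| := integral_nonneg fun x => abs_nonneg _
    have h3 : (0:ℝ) ≤ ∫ x, |v x| := integral_nonneg fun x => abs_nonneg _
    gcongr

lemma s13L_measurable {φ : ℝ → ℝ} (hφ : Measurable φ) : Measurable (s13L φ) := by
  unfold s13L; fun_prop

lemma s13L_bound {φ : ℝ → ℝ} {Kφ : ℝ} (h : ∀ x, |φ x| ≤ Kφ) (p : ℝ × ℝ) :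
    |s13L φ p| ≤ 4 * Kφ := by
  unfold s13L
  have g1 := h ((p.1 + p.2) / 2)
  have g2 := h p.1
  have g3 := h p.2
  have e1 : |2 * φ ((p.1 + p.2) / 2) - φ p.1 - φ p.2|
      ≤ |2 * φ ((p.1 + p.2) / 2) - φ p.1| + |φ p.2| := abs_sub _ _
  have e2 : |2 * φ ((p.1 + p.2) / 2) - φ p.1|
      ≤ |2 * φ ((p.1 + p.2) / 2)| + |φ p.1| := abs_sub _ _
  rw [abs_mul, abs_two] at e2
  linarith

lemma s13arith1 (A A' B' vθ vθt w Kθ Kθt c : ℝ)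
    (h1 : |vθ| ≤ Kθ) (h2 : |vθt| ≤ Kθt) (h3 : |w| ≤ c) :
    |(2 * A * B' * vθ + A' * B' * vθt) * w|
      ≤ ((2 * Kθ + Kθt) * c) * (|(|A| + |A'|)| * |B'|) := by
  have hKθ : 0 ≤ Kθ := (abs_nonneg _).trans h1
  have hKθt : 0 ≤ Kθt := (abs_nonneg _).trans h2
  have hc : 0 ≤ c := (abs_nonneg _).trans h3
  rw [abs_of_nonneg (by positivity : (0:ℝ) ≤ |A| + |A'|)]
  have eX : |2 * A * B' * vθ| ≤ 2 * |A| * |B'| * Kθ := by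
    rw [abs_mul, abs_mul, abs_mul, abs_two]
    have := mul_le_mul_of_nonneg_left h1 (by positivity : (0:ℝ) ≤ 2 * |A| * |B'|)
    linarith
  have eY : |A' * B' * vθt| ≤ |A'| * |B'| * Kθt := by
    rw [abs_mul, abs_mul]
    have := mul_le_mul_of_nonneg_left h2 (by positivity : (0:ℝ) ≤ |A'| * |B'|)
    linarith
  have eS : |2 * A * B' * vθ + A' * B' * vθt|
      ≤ 2 * |A| * |B'| * Kθ + |A'| * |B'| * Kθt :=
    (abs_add_le _ _).trans (add_le_add eX eY)
  rw [abs_mul]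
  have b3 : |2 * A * B' * vθ + A' * B' * vθt| * |w|
      ≤ (2 * |A| * |B'| * Kθ + |A'| * |B'| * Kθt) * c :=
    mul_le_mul eS h3 (abs_nonneg _) (by positivity)
  refine b3.trans ?_
  have hA := abs_nonneg A
  have hA' := abs_nonneg A'
  have hB' := abs_nonneg B'
  nlinarith [mul_nonneg (mul_nonneg hA' hB') hKθ, mul_nonneg (mul_nonneg hA hB') hKθt,
    mul_nonneg (mul_nonneg (mul_nonneg hA' hB') hKθ) hc,
    mul_nonneg (mul_nonneg (mul_nonneg hA hB') hKθt) hc]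

lemma s13arith2 (A B' vθ w Kθ c : ℝ) (h1 : |vθ| ≤ Kθ) (h3 : |w| ≤ c) :
    |2 * A * B' * vθ * w| ≤ (2 * Kθ * c) * (|A| * |B'|) := by
  have hKθ : 0 ≤ Kθ := (abs_nonneg _).trans h1
  have hc : 0 ≤ c := (abs_nonneg _).trans h3
  rw [abs_mul, abs_mul, abs_mul, abs_mul, abs_two]
  calc 2 * |A| * |B'| * |vθ| * |w| ≤ 2 * |A| * |B'| * Kθ * c := by
        refine mul_le_mul (by
          have := mul_le_mul_of_nonneg_left h1 (by positivity : (0:ℝ) ≤ 2 * |A| * |B'|)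
          linarith) h3 (abs_nonneg _) (by positivity)
    _ = (2 * Kθ * c) * (|A| * |B'|) := by ring

lemma s13arith3 (A B' vθt w Kθt c : ℝ) (h2 : |vθt| ≤ Kθt) (h3 : |w| ≤ c) :
    |A * B' * vθt * w| ≤ (Kθt * c) * (|A| * |B'|) := by
  have hKθt : 0 ≤ Kθt := (abs_nonneg _).trans h2
  have hc : 0 ≤ c := (abs_nonneg _).trans h3
  rw [abs_mul, abs_mul, abs_mul]
  calc |A| * |B'| * |vθt| * |w| ≤ |A| * |B'| * Kθt * c := by
        refine mul_le_mul (by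
          have := mul_le_mul_of_nonneg_left h2 (by positivity : (0:ℝ) ≤ |A| * |B'|)
          linarith) h3 (abs_nonneg _) (by positivity)
    _ = (Kθt * c) * (|A| * |B'|) := by ring

/-- Fubini swap over a square with a bound on the square. -/
lemma s13swapSq {S : Set ℝ} (hS : MeasurableSet S) (hfin : volume S < ⊤)
    {W : ℝ × ℝ → ℝ} (hWm : Measurable W) {c : ℝ}
    (hWb : ∀ z : ℝ × ℝ, z.1 ∈ S → z.2 ∈ S → |W z| ≤ c) :
    (∫ s in S, ∫ u in S, W (s, u)) = ∫ u in S, ∫ s in S, W (s, u) := by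
  apply integral_integral_swap (f := fun s u => W (s, u))
  have hres : (volume.restrict S).prod (volume.restrict S)
      = ((volume : Measure ℝ).prod volume).restrict (S ×ˢ S) := Measure.prod_restrict S S
  rw [hres]
  have hconst : Integrable (fun _ : ℝ × ℝ => c)
      (((volume : Measure ℝ).prod volume).restrict (S ×ˢ S)) := by
    rw [integrable_const_iff]
    right
    constructor
    rw [Measure.restrict_apply_univ, Measure.prod_prod]
    exact ENNReal.mul_lt_top hfin hfin
  refine hconst.mono' (hWm.aestronglyMeasurable) ?_
  refine (ae_restrict_iff' (hS.prod hS)).2 (Filter.Eventually.of_forall fun z hz => ?_)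
  rw [Real.norm_eq_abs]
  exact hWb z hz.1 hz.2

/-- Fubini swap: product space `ℝ × ℝ` against a finite-measure set in `ℝ`. -/
lemma s13swap_pu {S : Set ℝ} (hS : MeasurableSet S) (hfin : volume S < ⊤)
    {K : ℝ × ℝ → ℝ} (hKm : Measurable K) {V : (ℝ × ℝ) × ℝ → ℝ} (hKi : Integrable K volume)
    (hVm : Measurable V) {c : ℝ} (hVb : ∀ p u, u ∈ S → |V (p, u)| ≤ c) :
    (∫ p : ℝ × ℝ, ∫ u in S, K p * V (p, u)) = ∫ u in S, ∫ p : ℝ × ℝ, K p * V (p, u) := by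
  have hc : 0 ≤ ‖c‖ := norm_nonneg c
  apply integral_integral_swap (f := fun p u => K p * V (p, u))
  have hres : ((volume : Measure (ℝ × ℝ))).prod (volume.restrict S)
      = (((volume : Measure (ℝ × ℝ))).prod volume).restrict (univ ×ˢ S) := by
    conv_lhs => rw [← Measure.restrict_univ (μ := (volume : Measure (ℝ × ℝ)))]
    exact Measure.prod_restrict univ S
  have hmaj : Integrable (fun z : (ℝ × ℝ) × ℝ => ‖K z.1‖ * ‖c‖)
      ((volume : Measure (ℝ × ℝ)).prod (volume.restrict S)) := by
    have hcst : Integrable (fun _ : ℝ => ‖c‖) (volume.restrict S) := by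
      rw [integrable_const_iff]
      right
      constructor
      rw [Measure.restrict_apply_univ]
      exact hfin
    exact hKi.norm.mul_prod hcst
  refine hmaj.mono' ?_ ?_
  · exact ((hKm.comp measurable_fst).mul
      (hVm.comp (measurable_fst.prodMk measurable_snd))).aestronglyMeasurable
  · rw [hres]
    refine (ae_restrict_iff' (MeasurableSet.univ.prod hS)).2
      (Filter.Eventually.of_forall fun z hz => ?_)
    show ‖K z.1 * V (z.1, z.2)‖ ≤ ‖K z.1‖ * ‖c‖
    rw [Real.norm_eq_abs, abs_mul]
    have h1 : |V (z.1, z.2)| ≤ c := hVb z.1 z.2 hz.2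
    have h2 : |K z.1| ≤ ‖K z.1‖ := le_of_eq (Real.norm_eq_abs _).symm
    calc |K z.1| * |V (z.1, z.2)| ≤ |K z.1| * ‖c‖ := by
          refine mul_le_mul_of_nonneg_left (h1.trans (le_abs_self c)) (abs_nonneg _)
      _ = ‖K z.1‖ * ‖c‖ := by simp [Real.norm_eq_abs]

theorem stmt13 (T a C : ℝ) (hT : 0 < T) (hC : 0 < C)
    (θ θt : ℝ → ℝ)
    (hθm : Measurable θ) (hθb : ∃ K, ∀ r, |θ r| ≤ K)
    (hθtm : Measurable θt) (hθtb : ∃ K, ∀ r, |θt r| ≤ K)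
    (hθe : ∀ r, θ (-r) = θ r) (hθte : ∀ r, θt (-r) = θt r)
    (f ft : ℝ → ℝ → ℝ)
    (hfm : Measurable (Function.uncurry f)) (hftm : Measurable (Function.uncurry ft))
    (hfnn : ∀ x t, 0 ≤ f x t)
    (hfL1 : ∀ t ∈ Set.Icc (0:ℝ) T,
      Integrable (fun x => f x t) ∧ (∫ x : ℝ, |f x t|) ≤ C)
    (hftL1 : ∀ t ∈ Set.Icc (0:ℝ) T,
      Integrable (fun x => ft x t) ∧ (∫ x : ℝ, |ft x t|) ≤ C)
    (g : ℝ → ℝ → ℝ)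
    (hgm : Measurable (Function.uncurry g)) (hgb : ∃ K, ∀ x t, |g x t| ≤ K)
    -- (H1): integrated weak form of the perturbed equation, tested against
    -- bounded measurable φ.
    (H1 : ∀ φ : ℝ → ℝ, Measurable φ → (∃ K, ∀ x, |φ x| ≤ K) →
      ∀ t ∈ Set.Icc (0:ℝ) T,
        (∫ x : ℝ, ft x t * φ x)
          = ∫ s in (0:ℝ)..t, ∫ p : ℝ × ℝ,
              (2 * ft p.1 s * f p.2 s * θ (p.1 - p.2)
                + f p.1 s * f p.2 s * θt (p.1 - p.2))
                * (2 * φ ((p.1 + p.2) / 2) - φ p.1 - φ p.2))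
    -- (H2): integrated form of the adjoint problem with final condition
    -- `g(·,T) = 𝟙_{(-∞,a]}`.
    (H2 : ∀ x : ℝ, ∀ t ∈ Set.Icc (0:ℝ) T,
      g x t = (if x ≤ a then (1:ℝ) else 0)
        + ∫ s in t..T, ∫ y : ℝ,
            2 * f y s * θ (x - y) * (2 * g ((x + y) / 2) s - g x s - g y s)) :
    (∫ x in Set.Iic a, ft x T)
      = ∫ s in (0:ℝ)..T, ∫ r in Set.Ioi (0:ℝ), ∫ y : ℝ,
          2 * θt r * f (r + y) s * f y s
            * (2 * g (y + r / 2) s - g (r + y) s - g y s) := by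
  obtain ⟨Kθ, hKθ⟩ := hθb
  obtain ⟨Kθt, hKθt⟩ := hθtb
  obtain ⟨Kg, hKg⟩ := hgb
  have hKθ0 : 0 ≤ Kθ := (abs_nonneg _).trans (hKθ 0)
  have hKθt0 : 0 ≤ Kθt := (abs_nonneg _).trans (hKθt 0)
  have hKg0 : 0 ≤ Kg := (abs_nonneg _).trans (hKg 0 0)
  have hC0 : 0 ≤ C := hC.le
  have hTT : T ∈ Icc (0:ℝ) T := ⟨hT.le, le_rfl⟩
  have hS : MeasurableSet (Ioc (0:ℝ) T) := measurableSet_Ioc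
  have hfinS : (volume : Measure ℝ) (Ioc (0:ℝ) T) < ⊤ := by
    rw [Real.volume_Ioc]; exact ENNReal.ofReal_lt_top
  have hsub : Ioc (0:ℝ) T ⊆ Icc (0:ℝ) T := Ioc_subset_Icc_self
  have hBm : Measurable fun z : ℝ × ℝ => s13B θ f g z.1 z.2 := s13B_measurable hθm hfm hgm
  -- bound for B
  have hBb : ∀ u ∈ Icc (0:ℝ) T, ∀ x : ℝ, |s13B θ f g x u| ≤ 8 * Kθ * Kg * C :=
    fun u hu x => s13B_bound hKθ hKg (hfL1 u hu).1 (hfL1 u hu).2 x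
  -- the test function
  have hφam : Measurable (fun x : ℝ => if x ≤ a then (1:ℝ) else 0) :=
    Measurable.ite measurableSet_Iic measurable_const measurable_const
  have hφab : ∀ x : ℝ, |(if x ≤ a then (1:ℝ) else 0)| ≤ 1 := by
    intro x; split <;> norm_num
  -- g at final time
  have hgT : ∀ x, g x T = (if x ≤ a then (1:ℝ) else 0) := by
    intro x
    have h := H2 x T hTT
    simpa [intervalIntegral.integral_same] using h
  -- core integrability and bound for the full kernel against a bounded test W
  have coreK : ∀ s ∈ Icc (0:ℝ) T, ∀ W : (ℝ × ℝ) → ℝ, Measurable W → ∀ c : ℝ,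
      (∀ p, |W p| ≤ c) →
      Integrable (fun p : ℝ × ℝ =>
        (2 * ft p.1 s * f p.2 s * θ (p.1 - p.2) + f p.1 s * f p.2 s * θt (p.1 - p.2)) * W p)
          volume
      ∧ |∫ p : ℝ × ℝ,
          (2 * ft p.1 s * f p.2 s * θ (p.1 - p.2) + f p.1 s * f p.2 s * θt (p.1 - p.2)) * W p|
          ≤ ((2 * Kθ + Kθt) * c) * ((C + C) * C) := by
    intro s hs W hWm c hWb
    have hft1 := (hftL1 s hs).1
    have hf1 := (hfL1 s hs).1
    have hu_int : Integrable (fun x => |ft x s| + |f x s|) volume := hft1.abs.add hf1.abs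
    have hu_bd : (∫ x : ℝ, |(|ft x s| + |f x s|)|) ≤ C + C := by
      have e : (fun x => |(|ft x s| + |f x s|)|) = fun x : ℝ => |ft x s| + |f x s| := by
        funext x; exact abs_of_nonneg (by positivity)
      rw [e, integral_add hft1.abs hf1.abs]
      exact add_le_add (hftL1 s hs).2 (hfL1 s hs).2
    have hc0 : 0 ≤ c := (abs_nonneg _).trans (hWb (0, 0))
    have hb : ∀ p : ℝ × ℝ,
        |(2 * ft p.1 s * f p.2 s * θ (p.1 - p.2) + f p.1 s * f p.2 s * θt (p.1 - p.2)) * W p|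
          ≤ ((2 * Kθ + Kθt) * c) * (|(|ft p.1 s| + |f p.1 s|)| * |f p.2 s|) := fun p =>
      s13arith1 _ _ _ _ _ _ _ _ _ (hKθ _) (hKθt _) (hWb p)
    have hFm : Measurable (fun p : ℝ × ℝ =>
        (2 * ft p.1 s * f p.2 s * θ (p.1 - p.2) + f p.1 s * f p.2 s * θt (p.1 - p.2)) * W p) := by
      fun_prop
    exact s13core hu_int hf1 hu_bd (hfL1 s hs).2 hFm.aestronglyMeasurable
      (mul_nonneg (by linarith) hc0) hb
  -- core integrability and bound for the `θ` part
  have coreP : ∀ s ∈ Icc (0:ℝ) T, ∀ W : (ℝ × ℝ) → ℝ, Measurable W → ∀ c : ℝ,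
      (∀ p, |W p| ≤ c) →
      Integrable (fun p : ℝ × ℝ => 2 * ft p.1 s * f p.2 s * θ (p.1 - p.2) * W p) volume
      ∧ |∫ p : ℝ × ℝ, 2 * ft p.1 s * f p.2 s * θ (p.1 - p.2) * W p|
          ≤ (2 * Kθ * c) * (C * C) := by
    intro s hs W hWm c hWb
    have hft1 := (hftL1 s hs).1
    have hf1 := (hfL1 s hs).1
    have hc0 : 0 ≤ c := (abs_nonneg _).trans (hWb (0, 0))
    have hb : ∀ p : ℝ × ℝ, |2 * ft p.1 s * f p.2 s * θ (p.1 - p.2) * W p|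
        ≤ (2 * Kθ * c) * (|ft p.1 s| * |f p.2 s|) := fun p =>
      s13arith2 _ _ _ _ _ _ (hKθ _) (hWb p)
    have hFm : Measurable (fun p : ℝ × ℝ =>
        2 * ft p.1 s * f p.2 s * θ (p.1 - p.2) * W p) := by fun_prop
    exact s13core hft1 hf1 (hftL1 s hs).2 (hfL1 s hs).2 hFm.aestronglyMeasurable
      (by positivity) hb
  -- core integrability and bound for the `θt` part
  have coreQ : ∀ s ∈ Icc (0:ℝ) T, ∀ W : (ℝ × ℝ) → ℝ, Measurable W → ∀ c : ℝ,
      (∀ p, |W p| ≤ c) →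
      Integrable (fun p : ℝ × ℝ => f p.1 s * f p.2 s * θt (p.1 - p.2) * W p) volume
      ∧ |∫ p : ℝ × ℝ, f p.1 s * f p.2 s * θt (p.1 - p.2) * W p|
          ≤ (Kθt * c) * (C * C) := by
    intro s hs W hWm c hWb
    have hf1 := (hfL1 s hs).1
    have hc0 : 0 ≤ c := (abs_nonneg _).trans (hWb (0, 0))
    have hb : ∀ p : ℝ × ℝ, |f p.1 s * f p.2 s * θt (p.1 - p.2) * W p|
        ≤ (Kθt * c) * (|f p.1 s| * |f p.2 s|) := fun p =>
      s13arith3 _ _ _ _ _ _ (hKθt _) (hWb p)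
    have hFm : Measurable (fun p : ℝ × ℝ =>
        f p.1 s * f p.2 s * θt (p.1 - p.2) * W p) := by fun_prop
    exact s13core hf1 hf1 (hfL1 s hs).2 (hfL1 s hs).2 hFm.aestronglyMeasurable
      (mul_nonneg hKθt0 hc0) hb
  -- Step 1: the LHS as an integral against the test function
  have step1 : (∫ x in Iic a, ft x T) = ∫ x : ℝ, ft x T * (if x ≤ a then (1:ℝ) else 0) := by
    rw [← integral_indicator measurableSet_Iic]
    congr 1
    funext x
    by_cases h : x ≤ a <;> simp [Set.indicator_apply, h]
  -- Step 2: apply (H1) with the indicator test function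
  have step2 : (∫ x : ℝ, ft x T * (if x ≤ a then (1:ℝ) else 0))
      = ∫ s in Ioc (0:ℝ) T, ∫ p : ℝ × ℝ,
          (2 * ft p.1 s * f p.2 s * θ (p.1 - p.2) + f p.1 s * f p.2 s * θt (p.1 - p.2))
            * s13L (fun x => if x ≤ a then (1:ℝ) else 0) p := by
    have h := H1 (fun x => if x ≤ a then (1:ℝ) else 0) hφam ⟨1, hφab⟩ T hTT
    rw [intervalIntegral.integral_of_le hT.le] at h
    exact h
  -- integrability of `u ↦ B x u` on `Ioc s T`
  have hBint : ∀ s ∈ Icc (0:ℝ) T, ∀ x : ℝ,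
      IntegrableOn (fun u => s13B θ f g x u) (Ioc s T) volume := by
    intro s hs x
    have hfin' : (volume : Measure ℝ) (Ioc s T) < ⊤ := by
      rw [Real.volume_Ioc]; exact ENNReal.ofReal_lt_top
    have hcst : IntegrableOn (fun _ : ℝ => 8 * Kθ * Kg * C) (Ioc s T) volume := by
      refine integrableOn_const hfin'.ne
    refine hcst.mono' ((hBm.comp (measurable_const.prodMk measurable_id)).aestronglyMeasurable) ?_
    refine (ae_restrict_iff' measurableSet_Ioc).2 (Filter.Eventually.of_forall fun u hu => ?_)
    rw [Real.norm_eq_abs]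
    exact hBb u ⟨hs.1.trans hu.1.le, hu.2⟩ x
  -- pointwise decomposition of the test function via (H2)
  have hLdecomp : ∀ s ∈ Icc (0:ℝ) T, ∀ p : ℝ × ℝ,
      s13L (fun x => if x ≤ a then (1:ℝ) else 0) p
        = s13L (fun x => g x s) p
            - ∫ u in Ioc s T, s13L (fun x => s13B θ f g x u) p := by
    intro s hs p
    have hφg : ∀ x : ℝ, (if x ≤ a then (1:ℝ) else 0)
        = g x s - ∫ u in Ioc s T, s13B θ f g x u := by
      intro x
      have h2 := H2 x s hs
      rw [intervalIntegral.integral_of_le hs.2] at h2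
      have h2' : g x s = (if x ≤ a then (1:ℝ) else 0)
          + ∫ u in Ioc s T, s13B θ f g x u := h2
      linarith
    have i1 := hBint s hs ((p.1 + p.2) / 2)
    have i2 := hBint s hs p.1
    have i3 := hBint s hs p.2
    have hsplit : (∫ u in Ioc s T,
        (2 * s13B θ f g ((p.1 + p.2) / 2) u - s13B θ f g p.1 u - s13B θ f g p.2 u))
        = 2 * (∫ u in Ioc s T, s13B θ f g ((p.1 + p.2) / 2) u)
          - (∫ u in Ioc s T, s13B θ f g p.1 u) - ∫ u in Ioc s T, s13B θ f g p.2 u := by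
      have e1 : (∫ u in Ioc s T,
          (2 * s13B θ f g ((p.1 + p.2) / 2) u - s13B θ f g p.1 u - s13B θ f g p.2 u))
          = (∫ u in Ioc s T, (2 * s13B θ f g ((p.1 + p.2) / 2) u - s13B θ f g p.1 u))
            - ∫ u in Ioc s T, s13B θ f g p.2 u := integral_sub ((i1.const_mul 2).sub i2) i3
      have e2 : (∫ u in Ioc s T, (2 * s13B θ f g ((p.1 + p.2) / 2) u - s13B θ f g p.1 u))
          = (∫ u in Ioc s T, 2 * s13B θ f g ((p.1 + p.2) / 2) u)
            - ∫ u in Ioc s T, s13B θ f g p.1 u := integral_sub (i1.const_mul 2) i2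
      have e3 : (∫ u in Ioc s T, 2 * s13B θ f g ((p.1 + p.2) / 2) u)
          = 2 * ∫ u in Ioc s T, s13B θ f g ((p.1 + p.2) / 2) u :=
        integral_const_mul 2 _
      rw [e1, e2, e3]
    simp only [s13L]
    rw [hφg ((p.1 + p.2) / 2), hφg p.1, hφg p.2, hsplit]
    ring
  -- Step E: per-time decomposition of the kernel integral
  have stepE : ∀ s ∈ Icc (0:ℝ) T,
      (∫ p : ℝ × ℝ,
        (2 * ft p.1 s * f p.2 s * θ (p.1 - p.2) + f p.1 s * f p.2 s * θt (p.1 - p.2))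
          * s13L (fun x => if x ≤ a then (1:ℝ) else 0) p)
      = (∫ p : ℝ × ℝ,
          (2 * ft p.1 s * f p.2 s * θ (p.1 - p.2) + f p.1 s * f p.2 s * θt (p.1 - p.2))
            * s13L (fun x => g x s) p)
        - ∫ u in Ioc s T, ∫ p : ℝ × ℝ,
            (2 * ft p.1 s * f p.2 s * θ (p.1 - p.2) + f p.1 s * f p.2 s * θt (p.1 - p.2))
              * s13L (fun x => s13B θ f g x u) p := by
    intro s hs
    have hfin' : (volume : Measure ℝ) (Ioc s T) < ⊤ := by
      rw [Real.volume_Ioc]; exact ENNReal.ofReal_lt_top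
    have hsubs : Ioc s T ⊆ Icc (0:ℝ) T := fun u hu => ⟨hs.1.trans hu.1.le, hu.2⟩
    have hVm : Measurable fun q : (ℝ × ℝ) × ℝ => s13L (fun x => s13B θ f g x q.2) q.1 := by
      simp only [s13L]; fun_prop
    have hVb : ∀ (p : ℝ × ℝ) (u : ℝ), u ∈ Ioc s T →
        |s13L (fun x => s13B θ f g x u) p| ≤ 4 * (8 * Kθ * Kg * C) :=
      fun p u hu => s13L_bound (fun x => hBb u (hsubs hu) x) p
    have hWm : Measurable fun p : ℝ × ℝ =>
        ∫ u in Ioc s T, s13L (fun x => s13B θ f g x u) p :=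
      hVm.stronglyMeasurable.integral_prod_right'.measurable
    have hWb : ∀ p : ℝ × ℝ, |∫ u in Ioc s T, s13L (fun x => s13B θ f g x u) p|
        ≤ (4 * (8 * Kθ * Kg * C)) * (volume (Ioc s T)).toReal := by
      intro p
      have h := norm_setIntegral_le_of_norm_le_const hfin'
        (f := fun u => s13L (fun x => s13B θ f g x u) p)
        (fun u hu => by rw [Real.norm_eq_abs]; exact hVb p u hu)
      rwa [Real.norm_eq_abs] at h
    have hgsm : Measurable fun x => g x s := by fun_prop
    have int1 := (coreK s hs (fun p => s13L (fun x => g x s) p)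
      (s13L_measurable hgsm) (4 * Kg) (fun p => s13L_bound (fun x => hKg x s) p)).1
    have int2 := (coreK s hs (fun p => ∫ u in Ioc s T, s13L (fun x => s13B θ f g x u) p)
      hWm ((4 * (8 * Kθ * Kg * C)) * (volume (Ioc s T)).toReal) hWb).1
    have e1 : (fun p : ℝ × ℝ =>
        (2 * ft p.1 s * f p.2 s * θ (p.1 - p.2) + f p.1 s * f p.2 s * θt (p.1 - p.2))
          * s13L (fun x => if x ≤ a then (1:ℝ) else 0) p)
        = fun p : ℝ × ℝ =>
            (2 * ft p.1 s * f p.2 s * θ (p.1 - p.2) + f p.1 s * f p.2 s * θt (p.1 - p.2))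
              * s13L (fun x => g x s) p
            - (2 * ft p.1 s * f p.2 s * θ (p.1 - p.2) + f p.1 s * f p.2 s * θt (p.1 - p.2))
              * ∫ u in Ioc s T, s13L (fun x => s13B θ f g x u) p := by
      funext p
      rw [hLdecomp s hs p]
      ring
    rw [e1, integral_sub int1 int2]
    congr 1
    have e2 : (fun p : ℝ × ℝ =>
        (2 * ft p.1 s * f p.2 s * θ (p.1 - p.2) + f p.1 s * f p.2 s * θt (p.1 - p.2))
          * ∫ u in Ioc s T, s13L (fun x => s13B θ f g x u) p)
        = fun p : ℝ × ℝ => ∫ u in Ioc s T,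
            (2 * ft p.1 s * f p.2 s * θ (p.1 - p.2) + f p.1 s * f p.2 s * θt (p.1 - p.2))
              * s13L (fun x => s13B θ f g x u) p := by
      funext p
      exact (integral_const_mul _ _).symm
    rw [e2]
    have hKKm : Measurable fun p : ℝ × ℝ =>
        2 * ft p.1 s * f p.2 s * θ (p.1 - p.2) + f p.1 s * f p.2 s * θt (p.1 - p.2) := by
      fun_prop
    have hKKi : Integrable (fun p : ℝ × ℝ =>
        2 * ft p.1 s * f p.2 s * θ (p.1 - p.2) + f p.1 s * f p.2 s * θt (p.1 - p.2)) volume := by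
      have h := (coreK s hs (fun _ => (1:ℝ)) measurable_const 1 (fun p => by norm_num)).1
      simpa using h
    exact s13swap_pu measurableSet_Ioc hfin' hKKm hKKi hVm hVb
  -- joint measurability of the double-time kernel
  have hHm : Measurable fun z : ℝ × ℝ => ∫ p : ℝ × ℝ,
      (2 * ft p.1 z.1 * f p.2 z.1 * θ (p.1 - p.2) + f p.1 z.1 * f p.2 z.1 * θt (p.1 - p.2))
        * s13L (fun x => s13B θ f g x z.2) p := by
    have hI : Measurable fun q : (ℝ × ℝ) × (ℝ × ℝ) =>
        (2 * ft q.2.1 q.1.1 * f q.2.2 q.1.1 * θ (q.2.1 - q.2.2)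
          + f q.2.1 q.1.1 * f q.2.2 q.1.1 * θt (q.2.1 - q.2.2))
          * s13L (fun x => s13B θ f g x q.1.2) q.2 := by
      simp only [s13L]; fun_prop
    exact hI.stronglyMeasurable.integral_prod_right'.measurable
  have hM20 : 0 ≤ (2 * Kθ + Kθt) * (4 * (8 * Kθ * Kg * C)) * ((C + C) * C) := by
    have h1 : (0:ℝ) ≤ 2 * Kθ + Kθt := by linarith
    have h2 : (0:ℝ) ≤ 4 * (8 * Kθ * Kg * C) := by
      have := mul_nonneg (mul_nonneg (mul_nonneg (by norm_num : (0:ℝ) ≤ 8) hKθ0) hKg0) hC0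
      linarith
    have h3 : (0:ℝ) ≤ (C + C) * C := mul_nonneg (by linarith) hC0
    exact mul_nonneg (mul_nonneg h1 h2) h3
  have hHb : ∀ z : ℝ × ℝ, z.1 ∈ Icc (0:ℝ) T → z.2 ∈ Icc (0:ℝ) T →
      |∫ p : ℝ × ℝ,
        (2 * ft p.1 z.1 * f p.2 z.1 * θ (p.1 - p.2) + f p.1 z.1 * f p.2 z.1 * θt (p.1 - p.2))
          * s13L (fun x => s13B θ f g x z.2) p|
        ≤ (2 * Kθ + Kθt) * (4 * (8 * Kθ * Kg * C)) * ((C + C) * C) := by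
    intro z hz1 hz2
    have hWm : Measurable fun p : ℝ × ℝ => s13L (fun x => s13B θ f g x z.2) p := by
      refine s13L_measurable ?_
      exact hBm.comp (measurable_id.prodMk measurable_const)
    have h := (coreK z.1 hz1 (fun p => s13L (fun x => s13B θ f g x z.2) p) hWm
      (4 * (8 * Kθ * Kg * C)) (fun p => s13L_bound (fun x => hBb z.2 hz2 x) p)).2
    exact h
  -- the triangular kernel is measurable
  have hWtrim : Measurable fun z : ℝ × ℝ =>
      if z.1 < z.2 then
        ∫ p : ℝ × ℝ,
          (2 * ft p.1 z.1 * f p.2 z.1 * θ (p.1 - p.2) + f p.1 z.1 * f p.2 z.1 * θt (p.1 - p.2))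
            * s13L (fun x => s13B θ f g x z.2) p
      else 0 :=
    Measurable.ite (measurableSet_lt measurable_fst measurable_snd) hHm measurable_const
  have hWtrib : ∀ z : ℝ × ℝ, z.1 ∈ Ioc (0:ℝ) T → z.2 ∈ Ioc (0:ℝ) T →
      |if z.1 < z.2 then
        ∫ p : ℝ × ℝ,
          (2 * ft p.1 z.1 * f p.2 z.1 * θ (p.1 - p.2) + f p.1 z.1 * f p.2 z.1 * θt (p.1 - p.2))
            * s13L (fun x => s13B θ f g x z.2) p
      else 0| ≤ (2 * Kθ + Kθt) * (4 * (8 * Kθ * Kg * C)) * ((C + C) * C) := by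
    intro z hz1 hz2
    split_ifs with h
    · exact hHb z (hsub hz1) (hsub hz2)
    · simpa using hM20
  -- rewrite the inner time integral using the triangular kernel
  have hDeq : ∀ s ∈ Ioc (0:ℝ) T,
      (∫ u in Ioc (0:ℝ) T, if s < u then
        ∫ p : ℝ × ℝ,
          (2 * ft p.1 s * f p.2 s * θ (p.1 - p.2) + f p.1 s * f p.2 s * θt (p.1 - p.2))
            * s13L (fun x => s13B θ f g x u) p
      else 0)
      = ∫ u in Ioc s T, ∫ p : ℝ × ℝ,
          (2 * ft p.1 s * f p.2 s * θ (p.1 - p.2) + f p.1 s * f p.2 s * θt (p.1 - p.2))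
            * s13L (fun x => s13B θ f g x u) p := by
    intro s hs
    have hind : (fun u => if s < u then
        ∫ p : ℝ × ℝ,
          (2 * ft p.1 s * f p.2 s * θ (p.1 - p.2) + f p.1 s * f p.2 s * θt (p.1 - p.2))
            * s13L (fun x => s13B θ f g x u) p
      else 0)
        = (Ioi s).indicator (fun u =>
          ∫ p : ℝ × ℝ,
            (2 * ft p.1 s * f p.2 s * θ (p.1 - p.2) + f p.1 s * f p.2 s * θt (p.1 - p.2))
              * s13L (fun x => s13B θ f g x u) p) := by
      funext u
      simp [Set.indicator_apply, mem_Ioi]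
    have hset : Ioc (0:ℝ) T ∩ Ioi s = Ioc s T := by
      ext u
      simp only [mem_inter_iff, mem_Ioc, mem_Ioi]
      constructor
      · rintro ⟨⟨_, h2⟩, h3⟩; exact ⟨h3, h2⟩
      · rintro ⟨h1, h2⟩; exact ⟨⟨hs.1.trans h1, h2⟩, h1⟩
    rw [hind, setIntegral_indicator measurableSet_Ioi, hset]
  -- and per `u`
  have hDeq2 : ∀ u ∈ Ioc (0:ℝ) T,
      (∫ s in Ioc (0:ℝ) T, if s < u then
        ∫ p : ℝ × ℝ,
          (2 * ft p.1 s * f p.2 s * θ (p.1 - p.2) + f p.1 s * f p.2 s * θt (p.1 - p.2))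
            * s13L (fun x => s13B θ f g x u) p
      else 0)
      = ∫ s in Ioc (0:ℝ) u, ∫ p : ℝ × ℝ,
          (2 * ft p.1 s * f p.2 s * θ (p.1 - p.2) + f p.1 s * f p.2 s * θt (p.1 - p.2))
            * s13L (fun x => s13B θ f g x u) p := by
    intro u hu
    have hind : (fun s => if s < u then
        ∫ p : ℝ × ℝ,
          (2 * ft p.1 s * f p.2 s * θ (p.1 - p.2) + f p.1 s * f p.2 s * θt (p.1 - p.2))
            * s13L (fun x => s13B θ f g x u) p
      else 0)
        = (Iio u).indicator (fun s =>
          ∫ p : ℝ × ℝ,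
            (2 * ft p.1 s * f p.2 s * θ (p.1 - p.2) + f p.1 s * f p.2 s * θt (p.1 - p.2))
              * s13L (fun x => s13B θ f g x u) p) := by
      funext s
      simp [Set.indicator_apply, mem_Iio]
    have hset : Ioc (0:ℝ) T ∩ Iio u = Ioo (0:ℝ) u := by
      ext s
      simp only [mem_inter_iff, mem_Ioc, mem_Iio, mem_Ioo]
      constructor
      · rintro ⟨⟨h1, _⟩, h3⟩; exact ⟨h1, h3⟩
      · rintro ⟨h1, h3⟩; exact ⟨⟨h1, h3.le.trans hu.2⟩, h3⟩
    rw [hind, setIntegral_indicator measurableSet_Iio, hset]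
    exact (integral_Ioc_eq_integral_Ioo).symm
  -- Fubini on the triangle
  have hswapD : (∫ s in Ioc (0:ℝ) T, ∫ u in Ioc (0:ℝ) T, if s < u then
        ∫ p : ℝ × ℝ,
          (2 * ft p.1 s * f p.2 s * θ (p.1 - p.2) + f p.1 s * f p.2 s * θt (p.1 - p.2))
            * s13L (fun x => s13B θ f g x u) p
      else 0)
      = ∫ u in Ioc (0:ℝ) T, ∫ s in Ioc (0:ℝ) T, if s < u then
        ∫ p : ℝ × ℝ,
          (2 * ft p.1 s * f p.2 s * θ (p.1 - p.2) + f p.1 s * f p.2 s * θt (p.1 - p.2))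
            * s13L (fun x => s13B θ f g x u) p
      else 0 :=
    s13swapSq hS hfinS hWtrim hWtrib
  -- apply (H1) at time u with test function B(·,u)
  have step6 : ∀ u ∈ Ioc (0:ℝ) T,
      (∫ s in Ioc (0:ℝ) u, ∫ p : ℝ × ℝ,
        (2 * ft p.1 s * f p.2 s * θ (p.1 - p.2) + f p.1 s * f p.2 s * θt (p.1 - p.2))
          * s13L (fun x => s13B θ f g x u) p)
      = ∫ x : ℝ, ft x u * s13B θ f g x u := by
    intro u hu
    have hum : u ∈ Icc (0:ℝ) T := hsub hu
    have hφm : Measurable fun x => s13B θ f g x u :=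
      hBm.comp (measurable_id.prodMk measurable_const)
    have h := H1 (fun x => s13B θ f g x u) hφm ⟨8 * Kθ * Kg * C, fun x => hBb u hum x⟩ u hum
    rw [intervalIntegral.integral_of_le hu.1.le] at h
    exact h.symm
  -- pull `ft` inside the inner integral of `B` (Fubini)
  have stepH : ∀ u ∈ Icc (0:ℝ) T,
      (∫ x : ℝ, ft x u * s13B θ f g x u)
        = ∫ p : ℝ × ℝ, 2 * ft p.1 u * f p.2 u * θ (p.1 - p.2)
            * s13L (fun x => g x u) p := by
    intro u hu
    have hft1 := (hftL1 u hu).1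
    have hf1 := (hfL1 u hu).1
    have hFm : Measurable fun p : ℝ × ℝ => ft p.1 u *
        (2 * f p.2 u * θ (p.1 - p.2)
          * (2 * g ((p.1 + p.2) / 2) u - g p.1 u - g p.2 u)) := by fun_prop
    have hb : ∀ p : ℝ × ℝ, |ft p.1 u *
        (2 * f p.2 u * θ (p.1 - p.2)
          * (2 * g ((p.1 + p.2) / 2) u - g p.1 u - g p.2 u))|
        ≤ (2 * Kθ * (4 * Kg)) * (|ft p.1 u| * |f p.2 u|) := by
      intro p
      have e : ft p.1 u * (2 * f p.2 u * θ (p.1 - p.2)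
          * (2 * g ((p.1 + p.2) / 2) u - g p.1 u - g p.2 u))
          = 2 * ft p.1 u * f p.2 u * θ (p.1 - p.2)
            * (2 * g ((p.1 + p.2) / 2) u - g p.1 u - g p.2 u) := by ring
      rw [e]
      exact s13arith2 _ _ _ _ _ _ (hKθ _) (s13L_bound (fun x => hKg x u) p)
    have hc0 : (0:ℝ) ≤ 2 * Kθ * (4 * Kg) := by
      have := mul_nonneg hKθ0 hKg0; nlinarith
    have hFi : Integrable (fun p : ℝ × ℝ => ft p.1 u *
        (2 * f p.2 u * θ (p.1 - p.2)
          * (2 * g ((p.1 + p.2) / 2) u - g p.1 u - g p.2 u))) volume :=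
      (s13core hft1 hf1 (hftL1 u hu).2 (hfL1 u hu).2 hFm.aestronglyMeasurable hc0 hb).1
    rw [Measure.volume_eq_prod] at hFi
    calc (∫ x : ℝ, ft x u * s13B θ f g x u)
        = ∫ x : ℝ, ∫ y : ℝ, ft x u * (2 * f y u * θ (x - y)
            * (2 * g ((x + y) / 2) u - g x u - g y u)) := by
          congr 1; funext x; exact (integral_const_mul _ _).symm
      _ = ∫ p : ℝ × ℝ, ft p.1 u * (2 * f p.2 u * θ (p.1 - p.2)
            * (2 * g ((p.1 + p.2) / 2) u - g p.1 u - g p.2 u)) := by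
          rw [Measure.volume_eq_prod]
          exact (integral_prod _ hFi).symm
      _ = ∫ p : ℝ × ℝ, 2 * ft p.1 u * f p.2 u * θ (p.1 - p.2)
            * s13L (fun x => g x u) p := by
          congr 1; funext p; simp only [s13L]; ring
  -- time-measurability and integrability of the main inner integrals
  have hAgkm : Measurable fun s : ℝ => ∫ p : ℝ × ℝ,
      (2 * ft p.1 s * f p.2 s * θ (p.1 - p.2) + f p.1 s * f p.2 s * θt (p.1 - p.2))
        * s13L (fun x => g x s) p := by
    have hI : Measurable fun q : ℝ × (ℝ × ℝ) =>
        (2 * ft q.2.1 q.1 * f q.2.2 q.1 * θ (q.2.1 - q.2.2)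
          + f q.2.1 q.1 * f q.2.2 q.1 * θt (q.2.1 - q.2.2))
          * s13L (fun x => g x q.1) q.2 := by
      simp only [s13L]; fun_prop
    exact hI.stronglyMeasurable.integral_prod_right'.measurable
  have hAgpm : Measurable fun s : ℝ => ∫ p : ℝ × ℝ,
      2 * ft p.1 s * f p.2 s * θ (p.1 - p.2) * s13L (fun x => g x s) p := by
    have hI : Measurable fun q : ℝ × (ℝ × ℝ) =>
        2 * ft q.2.1 q.1 * f q.2.2 q.1 * θ (q.2.1 - q.2.2)
          * s13L (fun x => g x q.1) q.2 := by
      simp only [s13L]; fun_prop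
    exact hI.stronglyMeasurable.integral_prod_right'.measurable
  have hAgqm : Measurable fun s : ℝ => ∫ p : ℝ × ℝ,
      f p.1 s * f p.2 s * θt (p.1 - p.2) * s13L (fun x => g x s) p := by
    have hI : Measurable fun q : ℝ × (ℝ × ℝ) =>
        f q.2.1 q.1 * f q.2.2 q.1 * θt (q.2.1 - q.2.2)
          * s13L (fun x => g x q.1) q.2 := by
      simp only [s13L]; fun_prop
    exact hI.stronglyMeasurable.integral_prod_right'.measurable
  have hgsm : ∀ s : ℝ, Measurable fun x => g x s := by
    intro s; fun_prop
  have hAgkI : IntegrableOn (fun s : ℝ => ∫ p : ℝ × ℝ,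
      (2 * ft p.1 s * f p.2 s * θ (p.1 - p.2) + f p.1 s * f p.2 s * θt (p.1 - p.2))
        * s13L (fun x => g x s) p) (Ioc (0:ℝ) T) volume := by
    have hcst : IntegrableOn (fun _ : ℝ => (2 * Kθ + Kθt) * (4 * Kg) * ((C + C) * C))
        (Ioc (0:ℝ) T) volume := integrableOn_const hfinS.ne
    refine hcst.mono' hAgkm.aestronglyMeasurable
      ((ae_restrict_iff' hS).2 (Filter.Eventually.of_forall fun s hs => ?_))
    rw [Real.norm_eq_abs]
    exact (coreK s (hsub hs) _ (s13L_measurable (hgsm s)) (4 * Kg)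
      (fun p => s13L_bound (fun x => hKg x s) p)).2
  have hAgpI : IntegrableOn (fun s : ℝ => ∫ p : ℝ × ℝ,
      2 * ft p.1 s * f p.2 s * θ (p.1 - p.2) * s13L (fun x => g x s) p)
      (Ioc (0:ℝ) T) volume := by
    have hcst : IntegrableOn (fun _ : ℝ => 2 * Kθ * (4 * Kg) * (C * C))
        (Ioc (0:ℝ) T) volume := integrableOn_const hfinS.ne
    refine hcst.mono' hAgpm.aestronglyMeasurable
      ((ae_restrict_iff' hS).2 (Filter.Eventually.of_forall fun s hs => ?_))
    rw [Real.norm_eq_abs]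
    exact (coreP s (hsub hs) _ (s13L_measurable (hgsm s)) (4 * Kg)
      (fun p => s13L_bound (fun x => hKg x s) p)).2
  have hAgqI : IntegrableOn (fun s : ℝ => ∫ p : ℝ × ℝ,
      f p.1 s * f p.2 s * θt (p.1 - p.2) * s13L (fun x => g x s) p)
      (Ioc (0:ℝ) T) volume := by
    have hcst : IntegrableOn (fun _ : ℝ => Kθt * (4 * Kg) * (C * C))
        (Ioc (0:ℝ) T) volume := integrableOn_const hfinS.ne
    refine hcst.mono' hAgqm.aestronglyMeasurable
      ((ae_restrict_iff' hS).2 (Filter.Eventually.of_forall fun s hs => ?_))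
    rw [Real.norm_eq_abs]
    exact (coreQ s (hsub hs) _ (s13L_measurable (hgsm s)) (4 * Kg)
      (fun p => s13L_bound (fun x => hKg x s) p)).2
  -- integrability of the triangular term in `s`
  have hDm : Measurable fun s : ℝ => ∫ u in Ioc (0:ℝ) T, if s < u then
      ∫ p : ℝ × ℝ,
        (2 * ft p.1 s * f p.2 s * θ (p.1 - p.2) + f p.1 s * f p.2 s * θt (p.1 - p.2))
          * s13L (fun x => s13B θ f g x u) p
    else 0 :=
    hWtrim.stronglyMeasurable.integral_prod_right'.measurable
  have hDI : IntegrableOn (fun s : ℝ => ∫ u in Ioc (0:ℝ) T, if s < u then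
      ∫ p : ℝ × ℝ,
        (2 * ft p.1 s * f p.2 s * θ (p.1 - p.2) + f p.1 s * f p.2 s * θt (p.1 - p.2))
          * s13L (fun x => s13B θ f g x u) p
    else 0) (Ioc (0:ℝ) T) volume := by
    have hcst : IntegrableOn (fun _ : ℝ =>
        ((2 * Kθ + Kθt) * (4 * (8 * Kθ * Kg * C)) * ((C + C) * C)) * (volume (Ioc (0:ℝ) T)).toReal)
        (Ioc (0:ℝ) T) volume := integrableOn_const hfinS.ne
    refine hcst.mono' hDm.aestronglyMeasurable
      ((ae_restrict_iff' hS).2 (Filter.Eventually.of_forall fun s hs => ?_))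
    rw [Real.norm_eq_abs]
    have h := norm_setIntegral_le_of_norm_le_const hfinS
      (f := fun u => if s < u then
        ∫ p : ℝ × ℝ,
          (2 * ft p.1 s * f p.2 s * θ (p.1 - p.2) + f p.1 s * f p.2 s * θt (p.1 - p.2))
            * s13L (fun x => s13B θ f g x u) p
      else 0)
      (fun u hu => by rw [Real.norm_eq_abs]; exact hWtrib (s, u) hs hu)
    rwa [Real.norm_eq_abs] at h
  -- pointwise split of the kernel into its `θ` and `θt` parts
  have hsplitPQ : ∀ s ∈ Icc (0:ℝ) T,
      (∫ p : ℝ × ℝ,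
        (2 * ft p.1 s * f p.2 s * θ (p.1 - p.2) + f p.1 s * f p.2 s * θt (p.1 - p.2))
          * s13L (fun x => g x s) p)
      = (∫ p : ℝ × ℝ, 2 * ft p.1 s * f p.2 s * θ (p.1 - p.2) * s13L (fun x => g x s) p)
        + ∫ p : ℝ × ℝ, f p.1 s * f p.2 s * θt (p.1 - p.2) * s13L (fun x => g x s) p := by
    intro s hs
    have hP := (coreP s hs _ (s13L_measurable (hgsm s)) (4 * Kg)
      (fun p => s13L_bound (fun x => hKg x s) p)).1
    have hQ := (coreQ s hs _ (s13L_measurable (hgsm s)) (4 * Kg)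
      (fun p => s13L_bound (fun x => hKg x s) p)).1
    have e : (fun p : ℝ × ℝ =>
        (2 * ft p.1 s * f p.2 s * θ (p.1 - p.2) + f p.1 s * f p.2 s * θt (p.1 - p.2))
          * s13L (fun x => g x s) p)
        = fun p : ℝ × ℝ =>
            2 * ft p.1 s * f p.2 s * θ (p.1 - p.2) * s13L (fun x => g x s) p
            + f p.1 s * f p.2 s * θt (p.1 - p.2) * s13L (fun x => g x s) p := by
      funext p; ring
    rw [e, integral_add hP hQ]
  -- change of variables and symmetrization
  have stepCV : ∀ s ∈ Icc (0:ℝ) T,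
      (∫ p : ℝ × ℝ, f p.1 s * f p.2 s * θt (p.1 - p.2) * s13L (fun x => g x s) p)
        = ∫ r in Ioi (0:ℝ), ∫ y : ℝ,
            2 * θt r * f (r + y) s * f y s
              * (2 * g (y + r / 2) s - g (r + y) s - g y s) := by
    intro s hs
    have hFm : Measurable fun p : ℝ × ℝ =>
        f p.1 s * f p.2 s * θt (p.1 - p.2) * s13L (fun x => g x s) p := by
      simp only [s13L]; fun_prop
    have hFi : Integrable (fun p : ℝ × ℝ =>
        f p.1 s * f p.2 s * θt (p.1 - p.2) * s13L (fun x => g x s) p) volume :=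
      (coreQ s hs _ (s13L_measurable (hgsm s)) (4 * Kg)
        (fun p => s13L_bound (fun x => hKg x s) p)).1
    set F : ℝ × ℝ → ℝ :=
      fun p => f p.1 s * f p.2 s * θt (p.1 - p.2) * s13L (fun x => g x s) p with hFdef
    have hshear := measurePreserving_add_prod (volume : Measure ℝ) volume
    have hFiprod : Integrable F (volume.prod volume) := by
      rw [← Measure.volume_eq_prod]; exact hFi
    have hcomp : (∫ z : ℝ × ℝ, F (z.1 + z.2, z.2)) = ∫ p : ℝ × ℝ, F p := by
      rw [Measure.volume_eq_prod]
      exact hshear.integral_comp s13shear.measurableEmbedding F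
    have hFci : Integrable (fun z : ℝ × ℝ => F (z.1 + z.2, z.2)) (volume.prod volume) :=
      (hshear.integrable_comp hFiprod.aestronglyMeasurable).2 hFiprod
    have hiter : (∫ z : ℝ × ℝ, F (z.1 + z.2, z.2)) = ∫ r : ℝ, ∫ y : ℝ, F (r + y, y) := by
      rw [Measure.volume_eq_prod]
      exact integral_prod _ hFci
    have hJi : Integrable (fun r : ℝ => ∫ y : ℝ, F (r + y, y)) volume :=
      hFci.integral_prod_left
    have hJsym : ∀ r : ℝ, (∫ y : ℝ, F (-r + y, y)) = ∫ y : ℝ, F (r + y, y) := by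
      intro r
      calc (∫ y : ℝ, F (-r + y, y))
          = ∫ y : ℝ, F (-r + (y + r), y + r) :=
            (integral_add_right_eq_self (fun y => F (-r + y, y)) r).symm
        _ = ∫ y : ℝ, F (r + y, y) := by
            congr 1
            funext y
            have e1 : -r + (y + r) = y := by ring
            rw [e1, hFdef]
            simp only [s13L]
            have e2 : y - (y + r) = -r := by ring
            have e3 : (y + (y + r)) / 2 = ((r + y) + y) / 2 := by ring
            have e4 : (r + y) - y = r := by ring
            rw [e2, e3, e4, hθte r]
            ring
    have hsplit : (∫ r : ℝ, ∫ y : ℝ, F (r + y, y))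
        = (∫ r in Iic (0:ℝ), ∫ y : ℝ, F (r + y, y))
          + ∫ r in Ioi (0:ℝ), ∫ y : ℝ, F (r + y, y) :=
      (intervalIntegral.integral_Iic_add_Ioi hJi.integrableOn hJi.integrableOn).symm
    have hrefl : (∫ r in Iic (0:ℝ), ∫ y : ℝ, F (r + y, y))
        = ∫ r in Ioi (0:ℝ), ∫ y : ℝ, F (r + y, y) := by
      have h0 := integral_comp_neg_Iic (0:ℝ) (fun r => ∫ y : ℝ, F (r + y, y))
      rw [neg_zero] at h0
      rw [← h0]
      congr 1
      funext r
      exact (hJsym r).symm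
    have e4 : ∀ r : ℝ, (∫ y : ℝ, 2 * θt r * f (r + y) s * f y s
        * (2 * g (y + r / 2) s - g (r + y) s - g y s))
        = 2 * ∫ y : ℝ, F (r + y, y) := by
      intro r
      rw [← integral_const_mul]
      congr 1
      funext y
      rw [hFdef]
      simp only [s13L]
      have e5 : ((r + y) + y) / 2 = y + r / 2 := by ring
      have e6 : (r + y) - y = r := by ring
      rw [e5, e6]
      ring
    calc (∫ p : ℝ × ℝ, F p)
        = ∫ z : ℝ × ℝ, F (z.1 + z.2, z.2) := hcomp.symm
      _ = ∫ r : ℝ, ∫ y : ℝ, F (r + y, y) := hiter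
      _ = (∫ r in Ioi (0:ℝ), ∫ y : ℝ, F (r + y, y))
          + ∫ r in Ioi (0:ℝ), ∫ y : ℝ, F (r + y, y) := by rw [hsplit, hrefl]
      _ = ∫ r in Ioi (0:ℝ), 2 * ∫ y : ℝ, F (r + y, y) := by
          rw [integral_const_mul]
          ring
      _ = ∫ r in Ioi (0:ℝ), ∫ y : ℝ,
            2 * θt r * f (r + y) s * f y s
              * (2 * g (y + r / 2) s - g (r + y) s - g y s) := by
          congr 1
          funext r
          exact (e4 r).symm
  -- grand assembly
  calc (∫ x in Iic a, ft x T)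
      = ∫ x : ℝ, ft x T * (if x ≤ a then (1:ℝ) else 0) := step1
    _ = ∫ s in Ioc (0:ℝ) T, ∫ p : ℝ × ℝ,
          (2 * ft p.1 s * f p.2 s * θ (p.1 - p.2) + f p.1 s * f p.2 s * θt (p.1 - p.2))
            * s13L (fun x => if x ≤ a then (1:ℝ) else 0) p := step2
    _ = ∫ s in Ioc (0:ℝ) T,
          ((∫ p : ℝ × ℝ,
            (2 * ft p.1 s * f p.2 s * θ (p.1 - p.2) + f p.1 s * f p.2 s * θt (p.1 - p.2))
              * s13L (fun x => g x s) p)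
          - ∫ u in Ioc (0:ℝ) T, if s < u then
              ∫ p : ℝ × ℝ,
                (2 * ft p.1 s * f p.2 s * θ (p.1 - p.2) + f p.1 s * f p.2 s * θt (p.1 - p.2))
                  * s13L (fun x => s13B θ f g x u) p
            else 0) := by
        refine setIntegral_congr_fun hS fun s hs => ?_
        rw [stepE s (hsub hs), hDeq s hs]
    _ = (∫ s in Ioc (0:ℝ) T, ∫ p : ℝ × ℝ,
          (2 * ft p.1 s * f p.2 s * θ (p.1 - p.2) + f p.1 s * f p.2 s * θt (p.1 - p.2))
            * s13L (fun x => g x s) p)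
        - ∫ s in Ioc (0:ℝ) T, ∫ u in Ioc (0:ℝ) T, if s < u then
            ∫ p : ℝ × ℝ,
              (2 * ft p.1 s * f p.2 s * θ (p.1 - p.2) + f p.1 s * f p.2 s * θt (p.1 - p.2))
                * s13L (fun x => s13B θ f g x u) p
          else 0 := integral_sub hAgkI hDI
    _ = (∫ s in Ioc (0:ℝ) T, ∫ p : ℝ × ℝ,
          (2 * ft p.1 s * f p.2 s * θ (p.1 - p.2) + f p.1 s * f p.2 s * θt (p.1 - p.2))
            * s13L (fun x => g x s) p)
        - ∫ u in Ioc (0:ℝ) T, ∫ p : ℝ × ℝ,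
            2 * ft p.1 u * f p.2 u * θ (p.1 - p.2) * s13L (fun x => g x u) p := by
        rw [hswapD]
        congr 1
        refine setIntegral_congr_fun hS fun u hu => ?_
        rw [hDeq2 u hu, step6 u hu, stepH u (hsub hu)]
    _ = ((∫ s in Ioc (0:ℝ) T, ∫ p : ℝ × ℝ,
            2 * ft p.1 s * f p.2 s * θ (p.1 - p.2) * s13L (fun x => g x s) p)
          + ∫ s in Ioc (0:ℝ) T, ∫ p : ℝ × ℝ,
            f p.1 s * f p.2 s * θt (p.1 - p.2) * s13L (fun x => g x s) p)
        - ∫ u in Ioc (0:ℝ) T, ∫ p : ℝ × ℝ,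
            2 * ft p.1 u * f p.2 u * θ (p.1 - p.2) * s13L (fun x => g x u) p := by
        congr 1
        rw [← integral_add hAgpI hAgqI]
        refine setIntegral_congr_fun hS fun s hs => ?_
        rw [hsplitPQ s (hsub hs)]
    _ = ∫ s in Ioc (0:ℝ) T, ∫ p : ℝ × ℝ,
          f p.1 s * f p.2 s * θt (p.1 - p.2) * s13L (fun x => g x s) p := by ring
    _ = ∫ s in Ioc (0:ℝ) T, ∫ r in Ioi (0:ℝ), ∫ y : ℝ,
          2 * θt r * f (r + y) s * f y s
            * (2 * g (y + r / 2) s - g (r + y) s - g y s) :=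
        setIntegral_congr_fun hS fun s hs => stepCV s (hsub hs)
    _ = ∫ s in (0:ℝ)..T, ∫ r in Ioi (0:ℝ), ∫ y : ℝ,
          2 * θt r * f (r + y) s * f y s
            * (2 * g (y + r / 2) s - g (r + y) s - g y s) :=
        (intervalIntegral.integral_of_le hT.le).symm
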